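/- Let f : ℕ → ℝ≥0 have finite support, let K ≥ (log ‖f‖₁)⁴ with log ‖f‖₁ ≥ 4, and suppose ∑_{ab=cd} f(a)f(b)f(c)f(d) ≤ K·‖f‖₂⁴. With the choices l+1 = (log K)^{1/2}·(log log ‖f‖₁)^{-1/2} and V = exp((β/2 + (5/4)(l+1))·log log ‖f‖₁), where β ≈ 1.7032, we have V² + V^{-2l}·K^{1/2}·exp((2(l+1)² + β(l+1))·log log ‖f‖₁) ≤ 2·(log ‖f‖₁)^β·exp((5/2)(log K)^{1/2}(log log ‖f‖₁)^{1/2}). -/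

import Mathlib

theorem stmt_17 (f : ℕ → ℝ) (hf : ∀ n, 0 ≤ f n) (hsupp : (Function.support f).Finite)
    (β L1 K l V : ℝ)
    (hβ : β = -2 * Real.sqrt 3 - 6 * Real.log (1 - 1 / Real.sqrt 3))
    (hL1 : L1 = ∑ᶠ n, f n) (hL1' : 4 ≤ Real.log L1)
    (hK : (Real.log L1) ^ 4 ≤ K)
    (hK4 : ∑ᶠ a, ∑ᶠ b, ∑ᶠ c, ∑ᶠ d, (if a * b = c * d then f a * f b * f c * f d else 0) ≤
      K * (∑ᶠ n, f n ^ 2) ^ 2)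
    (hl : l + 1 = Real.sqrt (Real.log K) / Real.sqrt (Real.log (Real.log L1)))
    (hV : V = Real.exp ((β / 2 + 5 / 4 * (l + 1)) * Real.log (Real.log L1))) :
    V ^ 2 + V ^ (-(2 * l)) * Real.sqrt K *
        Real.exp ((2 * (l + 1) ^ 2 + β * (l + 1)) * Real.log (Real.log L1)) ≤
      2 * (Real.log L1) ^ β *
        Real.exp (5 / 2 * Real.sqrt (Real.log K) * Real.sqrt (Real.log (Real.log L1))) := by
  set lam := Real.log (Real.log L1) with hlamdef
  have hlog1 : (0:ℝ) < Real.log L1 := by linarith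
  have hlam0 : 0 < lam := Real.log_pos (by linarith)
  have hK1 : (1:ℝ) ≤ K := by
    nlinarith [pow_le_pow_left₀ (by norm_num : (0:ℝ) ≤ 4) hL1' 4]
  have hKpos : (0:ℝ) < K := by linarith
  have hlogK0 : 0 ≤ Real.log K := Real.log_nonneg hK1
  have hslam : Real.sqrt lam ≠ 0 := by positivity
  have ht2 : (l + 1) ^ 2 * lam = Real.log K := by
    rw [hl, div_pow, Real.sq_sqrt hlogK0, Real.sq_sqrt hlam0.le]
    field_simp
  have hsq : Real.sqrt (Real.log K) * Real.sqrt lam = (l + 1) * lam := by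
    rw [hl]
    have : lam = Real.sqrt lam * Real.sqrt lam := (Real.mul_self_sqrt hlam0.le).symm
    rw [this]
    field_simp
    rw [Real.sqrt_sq (Real.sqrt_nonneg _)]
  have hV2 : V ^ 2 = Real.exp ((β / 2 + 5 / 4 * (l + 1)) * lam +
      (β / 2 + 5 / 4 * (l + 1)) * lam) := by
    rw [hV, sq, ← Real.exp_add]
  have hVneg : V ^ (-(2 * l)) =
      Real.exp ((β / 2 + 5 / 4 * (l + 1)) * lam * (-(2 * l))) := by
    rw [hV, ← Real.exp_mul]
  have hsK : Real.sqrt K = Real.exp (Real.log K * (1 / 2)) := by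
    rw [← Real.rpow_def_of_pos hKpos, ← Real.sqrt_eq_rpow]
  have hrpow : (Real.log L1) ^ β = Real.exp (lam * β) := Real.rpow_def_of_pos hlog1 β
  rw [hV2, hVneg, hsK, hrpow, mul_assoc, ← Real.exp_add,
    ← Real.exp_add]
  have e1 : (β / 2 + 5 / 4 * (l + 1)) * lam + (β / 2 + 5 / 4 * (l + 1)) * lam =
      lam * β + 5 / 2 * Real.sqrt (Real.log K) * Real.sqrt lam := by
    linear_combination (5 / 2) * hsq.symm
  have e2 : (β / 2 + 5 / 4 * (l + 1)) * lam * (-(2 * l)) + (Real.log K * (1 / 2) +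
      (2 * (l + 1) ^ 2 + β * (l + 1)) * lam) =
      lam * β + 5 / 2 * Real.sqrt (Real.log K) * Real.sqrt lam := by
    linear_combination (5 / 2) * hsq.symm + (-1 / 2) * ht2
  rw [e1, e2, show 2 * Real.exp (lam * β) *
      Real.exp (5 / 2 * Real.sqrt (Real.log K) * Real.sqrt lam) =
      2 * Real.exp (lam * β + 5 / 2 * Real.sqrt (Real.log K) * Real.sqrt lam) by
    rw [mul_assoc, ← Real.exp_add]]
  linarith
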